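/- (Feasibility of the dual solution in the general hardness proof) Let φ = (1+√5)/2, μ = (√5−1)e / (3e − √5·e + 2e^{(1+√5)/2}), and λ(x) = (√5−1)e^x / (3e − √5·e + 2e^{(1+√5)/2}) for x ∈ [1, φ]. Then: (i) φ·μ + ∫_1^φ λ(x)(x+1) dx ≥ 1, and (ii) μ·(x−1) + ∫_1^x λ(y)(x−y−1) dy ≤ 0 for all x ∈ [1, φ], and the objective value satisfies μ + ∫_1^φ λ(x)(x+1) dx = 2e^{√5/2} / (3√e + 2e^{√5/2} − √(5e)). -/

import Mathlib

open Real

lemma integ1 (a b : ℝ) :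
    ∫ x in a..b, Real.exp x * (x + 1) = b * Real.exp b - a * Real.exp a := by
  have h : ∀ x ∈ Set.uIcc a b, HasDerivAt (fun t => t * Real.exp t) (Real.exp x * (x + 1)) x := by
    intro x _
    have : HasDerivAt (fun t => t * Real.exp t) _ x := (hasDerivAt_id x).mul (Real.hasDerivAt_exp x)
    convert this using 1 <;> simp [id_eq] <;> ring
  rw [intervalIntegral.integral_eq_sub_of_hasDerivAt h]
  exact (Real.continuous_exp.mul (by continuity)).intervalIntegrable a b

lemma integ2 (x a b : ℝ) :
    ∫ y in a..b, Real.exp y * (x - y - 1) = (x - b) * Real.exp b - (x - a) * Real.exp a := by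
  have h : ∀ y ∈ Set.uIcc a b,
      HasDerivAt (fun t => (x - t) * Real.exp t) (Real.exp y * (x - y - 1)) y := by
    intro y _
    have : HasDerivAt (fun t => (x - t) * Real.exp t) _ y := ((hasDerivAt_const y x).sub (hasDerivAt_id y)).mul (Real.hasDerivAt_exp y)
    convert this using 1 <;> simp [id_eq] <;> ring
  rw [intervalIntegral.integral_eq_sub_of_hasDerivAt h]
  exact (Real.continuous_exp.mul (by continuity)).intervalIntegrable a b

theorem dual_feasibility
    (φ μ : ℝ) (lam : ℝ → ℝ)
    (hφ : φ = (1 + Real.sqrt 5) / 2)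
    (hμ : μ = (Real.sqrt 5 - 1) * Real.exp 1 /
      (3 * Real.exp 1 - Real.sqrt 5 * Real.exp 1 + 2 * Real.exp ((1 + Real.sqrt 5) / 2)))
    (hlam : ∀ x : ℝ, lam x = (Real.sqrt 5 - 1) * Real.exp x /
      (3 * Real.exp 1 - Real.sqrt 5 * Real.exp 1 + 2 * Real.exp ((1 + Real.sqrt 5) / 2))) :
    (φ * μ + ∫ x in (1 : ℝ)..φ, lam x * (x + 1)) ≥ 1
      ∧ (∀ x ∈ Set.Icc (1 : ℝ) φ,
          μ * (x - 1) + (∫ y in (1 : ℝ)..x, lam y * (x - y - 1)) ≤ 0)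
      ∧ (μ + ∫ x in (1 : ℝ)..φ, lam x * (x + 1))
          = 2 * Real.exp (Real.sqrt 5 / 2) /
            (3 * Real.sqrt (Real.exp 1) + 2 * Real.exp (Real.sqrt 5 / 2)
              - Real.sqrt (5 * Real.exp 1)) := by
  set s := Real.sqrt 5 with hs
  have hs2 : s ^ 2 = 5 := Real.sq_sqrt (by norm_num)
  have hs0 : 0 < s := Real.sqrt_pos.mpr (by norm_num)
  have hs3 : s < 3 := by nlinarith
  have hs1 : 1 < s := by nlinarith
  have hE : (0:ℝ) < Real.exp 1 := Real.exp_pos 1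
  have hF : (0:ℝ) < Real.exp ((1+s)/2) := Real.exp_pos _
  set E := Real.exp 1 with hEdef
  set F := Real.exp ((1+s)/2) with hFdef
  set D := 3 * E - s * E + 2 * F with hD
  have hD0 : 0 < D := by nlinarith
  have key : ∀ b : ℝ, (∫ x in (1:ℝ)..b, lam x * (x+1))
      = (s-1)/D * (b * Real.exp b - 1 * E) := by
    intro b
    have heq : (fun x => lam x * (x+1)) = fun x => (s-1)/D * (Real.exp x * (x+1)) := by
      funext x; rw [hlam x]; field_simp
    rw [heq, intervalIntegral.integral_const_mul, integ1, ← hEdef]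
  have key2 : ∀ x : ℝ, (∫ y in (1:ℝ)..x, lam y * (x - y - 1))
      = (s-1)/D * ((x-x) * Real.exp x - (x-1) * E) := by
    intro x
    have heq : (fun y => lam y * (x - y - 1)) = fun y => (s-1)/D * (Real.exp y * (x - y - 1)) := by
      funext y; rw [hlam y]; field_simp
    rw [heq, intervalIntegral.integral_const_mul, integ2, ← hEdef]
  have hFφ : Real.exp φ = F := by rw [hφ]
  refine ⟨?_, ?_, ?_⟩
  · rw [key φ, hμ, hFφ]
    have hnum : φ * ((s-1) * E) + (s-1) * (φ * F - 1 * E) = D := by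
      rw [hφ, hD]; linear_combination ((E+F)/2) * hs2
    have : φ * ((s-1) * E / D) + (s-1)/D * (φ * F - 1 * E)
        = (φ * ((s-1) * E) + (s-1) * (φ * F - 1 * E)) / D := by ring
    rw [this, hnum, div_self (ne_of_gt hD0)]
  · intro x hx
    rw [key2 x, hμ]
    have : (s-1) * E / D * (x - 1) + (s-1)/D * ((x-x) * Real.exp x - (x-1) * E) = 0 := by
      ring
    linarith [this]
  · rw [key φ, hμ, hFφ]
    have hnum : (s-1) * E + (s-1) * (φ * F - 1 * E) = 2 * F := by
      rw [hφ]; linear_combination (F/2) * hs2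
    have step : (s-1) * E / D + (s-1)/D * (φ * F - 1 * E)
        = ((s-1) * E + (s-1) * (φ * F - 1 * E)) / D := by ring
    rw [step, hnum]
    set h := Real.exp (2⁻¹ : ℝ) with hhdef
    set k := Real.exp (s / 2) with hkdef
    have hh0 : 0 < h := Real.exp_pos _
    have hk0 : 0 < k := Real.exp_pos _
    have hEh : E = h * h := by rw [hEdef, hhdef, ← Real.exp_add]; norm_num
    have hFhk : F = h * k := by rw [hFdef, hhdef, hkdef, ← Real.exp_add]; ring_nf
    have hsqE : Real.sqrt E = h := by
      rw [hEh, Real.sqrt_mul_self hh0.le]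
    have hsq5E : Real.sqrt (5 * E) = s * h := by
      rw [Real.sqrt_mul (by norm_num : (0:ℝ) ≤ 5), hs, hsqE]
    rw [hsqE, hsq5E]
    have hden : 0 < 3 * h + 2 * k - s * h := by nlinarith
    rw [div_eq_div_iff hD0.ne' hden.ne']
    rw [hD, hEh, hFhk]
    ring
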